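/- For δ ∈ (0,1/3] and t = δ²/(2+δ)², the logarithmic capacity of K₀ ∪ (1, 1+δ] equals -log(1-t) and satisfies -log(1-t) ≥ δ²/6. -/

import Mathlib

open Set Metric Complex Filter Topology

noncomputable section

def UU : Set ℂ := {z : ℂ | 1 < ‖z‖}

lemma isOpen_UU : IsOpen UU := isOpen_lt continuous_const continuous_norm

lemma openMap_aux {ψ : ℂ → ℂ} (hd : DifferentiableOn ℂ ψ UU) (hinj : Set.InjOn ψ UU)
    {V : Set ℂ} (hVU : V ⊆ UU) (hV : IsOpen V) : IsOpen (ψ '' V) := by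
  rw [isOpen_iff_mem_nhds]
  rintro _ ⟨z₀, hz₀, rfl⟩
  obtain ⟨r, hr, hball⟩ := Metric.isOpen_iff.1 hV z₀ hz₀
  have hba : AnalyticOnNhd ℂ ψ (ball z₀ r) :=
    (hd.mono (hball.trans hVU)).analyticOnNhd isOpen_ball
  have h1 : z₀ ∈ ball z₀ r := mem_ball_self hr
  have h2 : z₀ + (r / 2 : ℝ) ∈ ball z₀ r := by
    have : dist (z₀ + ((r / 2 : ℝ) : ℂ)) z₀ = r / 2 := by
      simp [dist_eq_norm, abs_of_pos, hr]
    simp only [mem_ball, this]; linarith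
  rcases hba.is_constant_or_isOpen (convex_ball z₀ r).isPreconnected with h | h
  · obtain ⟨w, hw⟩ := h
    have heq : z₀ = z₀ + ((r / 2 : ℝ) : ℂ) :=
      hinj (hVU (hball h1)) (hVU (hball h2)) (by rw [hw _ h1, hw _ h2])
    have : ((r / 2 : ℝ) : ℂ) = 0 := by linear_combination -heq
    norm_num at this; linarith
  · have hopen : IsOpen (ψ '' ball z₀ r) := h _ (subset_refl _) isOpen_ball
    exact Filter.mem_of_superset (hopen.mem_nhds ⟨z₀, h1, rfl⟩)
      (image_mono hball)

lemma proper_aux {ψ : ℂ → ℂ} (hd : DifferentiableOn ℂ ψ UU) (hb : Set.BijOn ψ UU UU)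
    {C : Set ℂ} (hC : IsCompact C) (hCU : C ⊆ UU) : IsCompact (UU ∩ ψ ⁻¹' C) := by
  set g := Function.invFunOn ψ UU with hg
  have hsurj : ∀ w ∈ C, ∃ z ∈ UU, ψ z = w := fun w hw => hb.surjOn (hCU hw)
  have hgU : ∀ w ∈ C, g w ∈ UU := fun w hw => Function.invFunOn_mem (hsurj w hw)
  have hgψ : ∀ w ∈ C, ψ (g w) = w := fun w hw => Function.invFunOn_eq (hsurj w hw)
  have hgcont : ContinuousOn g C := by
    intro w₀ hw₀
    rw [Metric.continuousWithinAt_iff]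
    intro ε hε
    set z₀ := g w₀ with hz₀
    have hz₀U : z₀ ∈ UU := hgU w₀ hw₀
    have hN : IsOpen (ψ '' (ball z₀ ε ∩ UU)) :=
      openMap_aux hd hb.injOn inter_subset_right (isOpen_ball.inter isOpen_UU)
    have hw₀N : w₀ ∈ ψ '' (ball z₀ ε ∩ UU) :=
      ⟨z₀, ⟨mem_ball_self hε, hz₀U⟩, hgψ w₀ hw₀⟩
    obtain ⟨δ', hδ', hsub⟩ := Metric.isOpen_iff.1 hN w₀ hw₀N
    refine ⟨δ', hδ', fun {w} hw hdist => ?_⟩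
    obtain ⟨z', ⟨hz'b, hz'U⟩, hz'ψ⟩ := hsub hdist
    have : g w = z' := by
      apply hb.injOn (hgU w hw) hz'U
      rw [hgψ w hw, hz'ψ]
    rw [this]; exact hz'b
  have hDeq : UU ∩ ψ ⁻¹' C = g '' C := by
    apply Subset.antisymm
    · rintro z ⟨hzU, hzC⟩
      refine ⟨ψ z, hzC, ?_⟩
      exact hb.injOn (hgU _ hzC) hzU (hgψ _ hzC)
    · rintro _ ⟨w, hw, rfl⟩
      exact ⟨hgU w hw, by rw [mem_preimage, hgψ w hw]; exact hw⟩
  rw [hDeq]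
  exact hC.image_of_continuousOn hgcont

lemma maxmod_aux (f : ℂ → ℂ) (r C : ℝ) (hr : 0 < r) (hr1 : r < 1)
    (hdf : DifferentiableOn ℂ f (ball (0:ℂ) ((r+1)/2)))
    (hbound : ∀ u : ℂ, ‖u‖ = r → ‖f u‖ ≤ C) : ‖f 0‖ ≤ C := by
  have hcl : closure (ball (0:ℂ) r) = closedBall 0 r := closure_ball 0 hr.ne'
  have h1 : DiffContOnCl ℂ f (ball (0:ℂ) r) := by
    apply DifferentiableOn.diffContOnCl
    rw [hcl]
    exact hdf.mono (closedBall_subset_ball (by linarith))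
  apply Complex.norm_le_of_forall_mem_frontier_norm_le isBounded_ball h1
  · intro z hz
    rw [frontier_ball _ hr.ne'] at hz
    exact hbound z (by simpa [mem_sphere_iff_norm] using hz)
  · exact subset_closure (mem_ball_self hr)

lemma key_lemma {ψ : ℂ → ℂ} {a M : ℝ} (ha : 0 < a)
    (hd : DifferentiableOn ℂ ψ UU) (hb : Set.BijOn ψ UU UU)
    (hM : ∀ z : ℂ, 1 < ‖z‖ → ‖ψ z - (a : ℂ) * z‖ ≤ M) : a = 1 := by
  have h2 : (1:ℝ) < ‖(2:ℂ)‖ := by norm_num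
  have hM0 : 0 ≤ M := le_trans (norm_nonneg _) (hM 2 h2)
  have hmaps : ∀ z : ℂ, 1 < ‖z‖ → 1 < ‖ψ z‖ := fun z hz => hb.mapsTo hz
  have hψd_at : ∀ z : ℂ, 1 < ‖z‖ → DifferentiableAt ℂ ψ z := fun z hz =>
    hd.differentiableAt (isOpen_UU.mem_nhds hz)
  set Q : ℂ → ℂ := fun u => if u = 0 then (a:ℂ) else u * ψ u⁻¹ with hQ
  have hQoff : ∀ u : ℂ, u ≠ 0 → Q u = u * ψ u⁻¹ := by intro u hu; simp [hQ, hu]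
  have hQ0 : Q 0 = (a:ℂ) := by simp [hQ]
  have hinv1 : ∀ u : ℂ, u ≠ 0 → ‖u‖ < 1 → 1 < ‖u⁻¹‖ := fun u hu h1 => by
    rw [norm_inv]; exact (one_lt_inv₀ (norm_pos_iff.mpr hu)).2 h1
  have hQsub : ∀ u : ℂ, u ≠ 0 → ‖u‖ < 1 → ‖Q u - a‖ ≤ M * ‖u‖ := by
    intro u hu h1
    have heq : Q u - a = u * (ψ u⁻¹ - (a:ℂ) * u⁻¹) := by
      rw [hQoff u hu]; field_simp
    rw [heq, norm_mul, mul_comm]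
    exact mul_le_mul_of_nonneg_right (hM u⁻¹ (hinv1 u hu h1)) (norm_nonneg u)
  have hQat : ∀ u : ℂ, u ≠ 0 → ‖u‖ < 1 → DifferentiableAt ℂ Q u := by
    intro u hu h1
    have hdd : DifferentiableAt ℂ (fun v : ℂ => v * ψ v⁻¹) u :=
      differentiableAt_id.mul ((hψd_at _ (hinv1 u hu h1)).comp u (differentiableAt_inv hu))
    apply hdd.congr_of_eventuallyEq
    filter_upwards [isOpen_ne.mem_nhds hu] with v hv
    exact hQoff v hv
  have hQdiff : DifferentiableOn ℂ Q (ball (0:ℂ) 1) := by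
    intro u hu
    rcases eq_or_ne u 0 with rfl | hu0
    · have hcont : ContinuousAt Q 0 := by
        rw [ContinuousAt, hQ0, tendsto_iff_norm_sub_tendsto_zero]
        apply squeeze_zero' (g := fun u : ℂ => M * ‖u‖)
        · filter_upwards with u using norm_nonneg _
        · filter_upwards [ball_mem_nhds (0:ℂ) one_pos] with v hv
          rcases eq_or_ne v 0 with rfl | hv0
          · simp [hQ0]
          · exact hQsub v hv0 (by simpa using hv)
        · have : Tendsto (fun u : ℂ => ‖u‖) (𝓝 0) (𝓝 0) := by
            simpa using continuous_norm.tendsto (0:ℂ)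
          simpa using this.const_mul M
      have hev : ∀ᶠ z in nhdsWithin (0:ℂ) {(0:ℂ)}ᶜ, DifferentiableAt ℂ Q z := by
        rw [eventually_nhdsWithin_iff]
        filter_upwards [ball_mem_nhds (0:ℂ) one_pos] with z hz hz0
        exact hQat z hz0 (by simpa using hz)
      exact ((Complex.analyticAt_of_differentiable_on_punctured_nhds_of_continuousAt hev
        hcont).differentiableAt).differentiableWithinAt
    · exact (hQat u hu0 (by simpa using hu)).differentiableWithinAt
  have hQne : ∀ u : ℂ, ‖u‖ < 1 → Q u ≠ 0 := by
    intro u h1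
    rcases eq_or_ne u 0 with rfl | hu0
    · rw [hQ0]; exact_mod_cast ha.ne'
    · rw [hQoff u hu0]
      refine mul_ne_zero hu0 ?_
      have := hmaps u⁻¹ (hinv1 u hu0 h1)
      intro hz; rw [hz] at this; simp at this; linarith
  -- Step 1 : 1 ≤ a
  have step1 : ∀ r : ℝ, 0 < r → r < 1 → r ≤ a := by
    intro r hr hr1
    have hdf : DifferentiableOn ℂ (fun u => (Q u)⁻¹) (ball (0:ℂ) ((r+1)/2)) := by
      refine DifferentiableOn.inv (hQdiff.mono (ball_subset_ball (by linarith))) ?_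
      intro u hu
      exact hQne u (lt_of_lt_of_le (by simpa using hu) (by linarith))
    have hbound : ∀ u : ℂ, ‖u‖ = r → ‖(Q u)⁻¹‖ ≤ r⁻¹ := by
      intro u hur
      have hu0 : u ≠ 0 := by intro h; rw [h] at hur; simp at hur; linarith
      have h1lt : 1 < ‖u⁻¹‖ := hinv1 u hu0 (by rw [hur]; exact hr1)
      have hψ1 : 1 < ‖ψ u⁻¹‖ := hmaps _ h1lt
      rw [hQoff u hu0, norm_inv, norm_mul, hur]
      rw [inv_le_inv₀ (by positivity) hr]
      nlinarith
    have := maxmod_aux _ r r⁻¹ hr hr1 hdf hbound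
    rw [hQ0] at this
    simp only [norm_inv, Complex.norm_real, Real.norm_eq_abs, abs_of_pos ha] at this
    rwa [inv_le_inv₀ ha hr] at this
  have hge : 1 ≤ a := by
    by_contra hlt
    push_neg at hlt
    have := step1 ((a+1)/2) (by linarith) (by linarith)
    linarith
  -- Step 2 : a ≤ 1
  have step2 : ∀ ε : ℝ, 0 < ε → a ≤ 1 + ε := by
    intro ε hε
    set S : ℝ := 2*a + M + 1 with hS
    set C : Set ℂ := {w : ℂ | 1 + ε ≤ ‖w‖ ∧ ‖w‖ ≤ S} with hC
    have hCc : IsCompact C := by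
      have : C = closedBall (0:ℂ) S ∩ {w : ℂ | 1 + ε ≤ ‖w‖} := by
        ext w; simp [hC, mem_closedBall, dist_eq_norm, and_comm]
      rw [this]
      exact (isCompact_closedBall _ _).inter_right
        (isClosed_le continuous_const continuous_norm)
    have hCU : C ⊆ UU := fun w hw => lt_of_lt_of_le (by linarith) hw.1
    have hD := proper_aux hd hb hCc hCU
    obtain ⟨ρ, hρ1, hρ2, hρ⟩ : ∃ ρ : ℝ, 1 < ρ ∧ ρ ≤ 2 ∧ ∀ z : ℂ, ‖z‖ = ρ → ψ z ∉ C := by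
      rcases Set.eq_empty_or_nonempty (UU ∩ ψ ⁻¹' C) with hemp | hne
      · refine ⟨3/2, by norm_num, by norm_num, fun z hz hmem => ?_⟩
        exact (Set.eq_empty_iff_forall_notMem.1 hemp z)
          ⟨by simp only [UU, Set.mem_setOf_eq]; rw [hz]; norm_num, hmem⟩
      · obtain ⟨zm, hzmD, hzmmin⟩ := hD.exists_isMinOn hne continuous_norm.continuousOn
        have hlam : 1 < ‖zm‖ := hzmD.1
        refine ⟨min 2 ((1+‖zm‖)/2), lt_min (by norm_num) (by linarith),
          min_le_left _ _, ?_⟩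
        intro z hz hmem
        have hz1 : 1 < ‖z‖ := by rw [hz]; exact lt_min (by norm_num) (by linarith)
        have hmin := hzmmin ⟨hz1, hmem⟩
        simp only [Set.mem_setOf_eq] at hmin
        rw [hz] at hmin
        have : min 2 ((1+‖zm‖)/2) ≤ (1+‖zm‖)/2 := min_le_right _ _
        linarith
    have hρpos : 0 < ρ := by linarith
    have hbound : ∀ u : ℂ, ‖u‖ = ρ⁻¹ → ‖Q u‖ ≤ 1 + ε := by
      intro u hu
      have hu0 : u ≠ 0 := by
        intro h; rw [h] at hu; simp at hu
        exact absurd hu.symm hρpos.ne'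
      have hnorminv : ‖u⁻¹‖ = ρ := by rw [norm_inv, hu, inv_inv]
      have hψnC := hρ u⁻¹ hnorminv
      have hle : ‖ψ u⁻¹‖ ≤ 2*a + M := by
        have h1lt : 1 < ‖u⁻¹‖ := by rw [hnorminv]; exact hρ1
        have hb1 := hM u⁻¹ h1lt
        have : ‖ψ u⁻¹‖ ≤ ‖ψ u⁻¹ - (a:ℂ) * u⁻¹‖ + ‖(a:ℂ) * u⁻¹‖ := by
          simpa using norm_add_le (ψ u⁻¹ - (a:ℂ) * u⁻¹) ((a:ℂ) * u⁻¹)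
        rw [norm_mul, hnorminv] at this
        have haa : ‖(a:ℂ)‖ = a := by
          rw [Complex.norm_real, Real.norm_eq_abs, abs_of_pos ha]
        rw [haa] at this
        nlinarith
      have hlt : ‖ψ u⁻¹‖ < 1 + ε := by
        by_contra hge'
        push_neg at hge'
        exact hψnC ⟨hge', by rw [hS]; linarith⟩
      rw [hQoff u hu0, norm_mul, hu]
      have h1 : ρ⁻¹ ≤ 1 := by
        rw [inv_le_one_iff₀]; right; linarith
      have hψpos : 0 < ‖ψ u⁻¹‖ := by
        have h1lt : 1 < ‖u⁻¹‖ := by rw [hnorminv]; exact hρ1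
        linarith [hmaps u⁻¹ h1lt]
      calc ρ⁻¹ * ‖ψ u⁻¹‖ ≤ 1 * (1 + ε) := by
            apply mul_le_mul h1 (le_of_lt hlt) (le_of_lt hψpos) (by norm_num)
        _ = 1 + ε := by ring
    have hρinv1 : ρ⁻¹ < 1 := by
      rw [inv_lt_one_iff₀]; right; exact hρ1
    have hdf : DifferentiableOn ℂ Q (ball (0:ℂ) ((ρ⁻¹+1)/2)) :=
      hQdiff.mono (ball_subset_ball (by linarith))
    have := maxmod_aux Q ρ⁻¹ (1+ε) (inv_pos.mpr hρpos) hρinv1 hdf hbound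
    rw [hQ0, Complex.norm_real, Real.norm_eq_abs, abs_of_pos ha] at this
    exact this
  have hle : a ≤ 1 := by
    by_contra hlt
    push_neg at hlt
    have := step2 ((a-1)/2) (by linarith)
    linarith
  linarith

/-! ### The explicit map -/

def OffSeg (b : ℝ) (ξ : ℂ) : Prop := ξ.im = 0 → ξ.re < -2 ∨ b < ξ.re

def Jmap (w : ℂ) : ℂ := w + w⁻¹

def nuF (ξ : ℂ) : ℂ := (1 - 4/ξ^2) ^ ((2:ℂ)⁻¹)

def sigmaF (ξ : ℂ) : ℂ := ξ * nuF ξ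

def hmap (ξ : ℂ) : ℂ := (ξ + sigmaF ξ)/2

lemma offSeg_ne_zero {b : ℝ} (hb : 0 ≤ b) {ξ : ℂ} (h : OffSeg b ξ) : ξ ≠ 0 := by
  intro h0
  rcases h (by simp [h0]) with h' | h' <;> rw [h0] at h' <;> simp at h' <;> linarith

lemma offSeg_mono {b : ℝ} (hb : 2 ≤ b) {ξ : ℂ} (h : OffSeg b ξ) : OffSeg 2 ξ :=
  fun him => (h him).imp id fun hh => lt_of_le_of_lt hb hh

lemma base_slit {ξ : ℂ} (hξ : OffSeg 2 ξ) : (1 - 4/ξ^2) ∈ Complex.slitPlane := by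
  have hξ0 : ξ ≠ 0 := offSeg_ne_zero (by norm_num) hξ
  by_contra hns
  rw [Complex.mem_slitPlane_iff] at hns
  push_neg at hns
  obtain ⟨hre, him⟩ := hns
  set x : ℝ := (1 - 4/ξ^2).re with hx
  have hxc : (1:ℂ) - 4/ξ^2 = (x:ℂ) := Complex.ext rfl (by simp [him])
  have hxle : x ≤ 0 := hre
  have h4 : ξ^2 * ((1:ℂ) - (x:ℂ)) = 4 := by
    have h2 : ξ^2 ≠ 0 := pow_ne_zero _ hξ0
    field_simp at hxc
    linear_combination hxc
  set q : ℝ := 4/(1-x) with hq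
  have h1x : (0:ℝ) < 1 - x := by linarith
  have hqpos : 0 < q := by positivity
  have hqle : q ≤ 4 := by
    rw [hq, div_le_iff₀ h1x]; nlinarith
  have hsq : ξ^2 = ((q:ℝ):ℂ) := by
    have : ((1:ℂ) - (x:ℂ)) ≠ 0 := by
      intro h0
      have : (1:ℂ) = (x:ℂ) := by linear_combination h0
      have := congrArg Complex.re this
      simp at this; linarith
    rw [hq]
    push_cast
    field_simp
    linear_combination h4
  rw [Complex.ext_iff] at hsq
  obtain ⟨hsre, hsim⟩ := hsq
  simp only [Complex.ofReal_re, Complex.ofReal_im] at hsre hsim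
  rw [pow_two, Complex.mul_re] at hsre
  rw [pow_two, Complex.mul_im] at hsim
  have him0 : ξ.im = 0 := by
    by_contra him0
    have hre0 : ξ.re = 0 := by
      have : 2 * ξ.re * ξ.im = 0 := by linarith
      rcases mul_eq_zero.1 this with h | h
      · rcases mul_eq_zero.1 h with h | h
        · norm_num at h
        · exact h
      · exact absurd h him0
    nlinarith
  rcases hξ him0 with h | h <;> nlinarith

lemma base_ne_zero {ξ : ℂ} (hξ : OffSeg 2 ξ) : (1:ℂ) - 4/ξ^2 ≠ 0 := by
  have := base_slit hξ
  rw [Complex.mem_slitPlane_iff] at this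
  intro h0
  rw [h0] at this
  simp at this

lemma nuF_re_pos {ξ : ℂ} (hξ : OffSeg 2 ξ) : 0 < (nuF ξ).re := by
  have hw : (1:ℂ) - 4/ξ^2 ∈ Complex.slitPlane := base_slit hξ
  have hw0 : (1:ℂ) - 4/ξ^2 ≠ 0 := base_ne_zero hξ
  have hdef : nuF ξ = Complex.exp (Complex.log ((1:ℂ) - 4/ξ^2) * (2:ℂ)⁻¹) := by
    rw [nuF, Complex.cpow_def_of_ne_zero hw0]
  rw [hdef, Complex.exp_re]
  have him : (Complex.log ((1:ℂ) - 4/ξ^2) * (2:ℂ)⁻¹).im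
      = Complex.arg ((1:ℂ) - 4/ξ^2) / 2 := by
    have h2 : ((2:ℂ)⁻¹) = ((2⁻¹ : ℝ) : ℂ) := by norm_num
    rw [h2, Complex.mul_im]
    simp [Complex.log_im]
    ring
  rw [him]
  have harg1 : -Real.pi < Complex.arg ((1:ℂ) - 4/ξ^2) := Complex.neg_pi_lt_arg _
  have harg2 : Complex.arg ((1:ℂ) - 4/ξ^2) < Real.pi :=
    lt_of_le_of_ne (Complex.arg_le_pi _) (Complex.mem_slitPlane_iff_arg.1 hw).1
  have hcos : 0 < Real.cos (Complex.arg ((1:ℂ) - 4/ξ^2) / 2) := by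
    apply Real.cos_pos_of_mem_Ioo
    constructor <;> [linarith; linarith]
  exact mul_pos (Real.exp_pos _) hcos

lemma sigmaF_sq {ξ : ℂ} (hξ : OffSeg 2 ξ) : sigmaF ξ ^ 2 = ξ^2 - 4 := by
  have hξ0 : ξ ≠ 0 := offSeg_ne_zero (by norm_num) hξ
  have hw0 : (1:ℂ) - 4/ξ^2 ≠ 0 := base_ne_zero hξ
  have hνsq : nuF ξ ^ 2 = 1 - 4/ξ^2 := by
    rw [nuF, sq, ← Complex.cpow_add _ _ hw0]
    norm_num
  rw [sigmaF, mul_pow, hνsq]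
  field_simp

lemma hmap_mul {ξ : ℂ} (hξ : OffSeg 2 ξ) : hmap ξ * ((ξ - sigmaF ξ)/2) = 1 := by
  rw [hmap]
  linear_combination (-(1:ℂ)/4) * sigmaF_sq hξ

lemma hmap_ne_zero {ξ : ℂ} (hξ : OffSeg 2 ξ) : hmap ξ ≠ 0 :=
  left_ne_zero_of_mul_eq_one (hmap_mul hξ)

lemma hmap_inv {ξ : ℂ} (hξ : OffSeg 2 ξ) : (hmap ξ)⁻¹ = (ξ - sigmaF ξ)/2 :=
  (eq_inv_of_mul_eq_one_right (hmap_mul hξ)).symm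

lemma hmap_norm {ξ : ℂ} (hξ : OffSeg 2 ξ) : 1 < ‖hmap ξ‖ := by
  have hξ0 : ξ ≠ 0 := offSeg_ne_zero (by norm_num) hξ
  have hν := nuF_re_pos hξ
  have hkey : Complex.normSq (ξ + sigmaF ξ) - Complex.normSq (ξ - sigmaF ξ)
      = 4 * (nuF ξ).re * Complex.normSq ξ := by
    simp only [sigmaF, Complex.normSq_apply, Complex.add_re, Complex.add_im,
      Complex.sub_re, Complex.sub_im, Complex.mul_re, Complex.mul_im]
    ring
  have hnsq : 0 < Complex.normSq ξ := Complex.normSq_pos.mpr hξ0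
  have hnorm : ∀ z : ℂ, ‖z‖^2 = Complex.normSq z := fun z => by
    rw [← Complex.sq_norm]
  have hlt : ‖ξ - sigmaF ξ‖ < ‖ξ + sigmaF ξ‖ := by
    have h1 : ‖ξ - sigmaF ξ‖^2 < ‖ξ + sigmaF ξ‖^2 := by
      rw [hnorm, hnorm]
      nlinarith [mul_pos (mul_pos (by norm_num : (0:ℝ) < 4) hν) hnsq]
    nlinarith [norm_nonneg (ξ - sigmaF ξ), norm_nonneg (ξ + sigmaF ξ)]
  have hAB : ‖hmap ξ‖ * ‖(ξ - sigmaF ξ)/2‖ = 1 := by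
    rw [← norm_mul, hmap_mul hξ, norm_one]
  have hA : ‖hmap ξ‖ = ‖ξ + sigmaF ξ‖/2 := by
    rw [hmap, norm_div]; norm_num
  have hB : ‖(ξ - sigmaF ξ)/2‖ = ‖ξ - sigmaF ξ‖/2 := by
    rw [norm_div]; norm_num
  rw [hA]
  rw [hA, hB] at hAB
  nlinarith [norm_nonneg (ξ - sigmaF ξ), norm_nonneg (ξ + sigmaF ξ), hAB, hlt]

lemma Jmap_hmap {ξ : ℂ} (hξ : OffSeg 2 ξ) : Jmap (hmap ξ) = ξ := by
  rw [Jmap, hmap_inv hξ, hmap]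
  ring

lemma Jmap_im_eq_zero {z : ℂ} (hz : 1 < ‖z‖) (him : (Jmap z).im = 0) : z.im = 0 := by
  have hz0 : z ≠ 0 := by
    intro h; rw [h] at hz; simp at hz; linarith
  have hns : 1 < Complex.normSq z := by
    have : ‖z‖^2 = Complex.normSq z := by rw [← Complex.sq_norm]
    nlinarith
  have hns0 : Complex.normSq z ≠ 0 := by positivity
  rw [Jmap, Complex.add_im, Complex.inv_im] at him
  have hfac : z.im * (Complex.normSq z - 1) = 0 := by
    field_simp at him
    linear_combination him
  rcases mul_eq_zero.1 hfac with h | h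
  · exact h
  · exfalso; nlinarith

lemma Jmap_ofReal (r : ℝ) : Jmap (r:ℂ) = ((r + r⁻¹ : ℝ) : ℂ) := by
  rw [Jmap]; push_cast; ring

lemma add_inv_lt {x y : ℝ} (hy : 1 < y) (hxy : y < x) : y + y⁻¹ < x + x⁻¹ := by
  have hy0 : 0 < y := by linarith
  have hx0 : 0 < x := by linarith
  have key : 0 < (x - y) * (x*y - 1) := mul_pos (by linarith) (by nlinarith)
  have heq : x + x⁻¹ - (y + y⁻¹) = (x - y) * (x*y - 1) / (x*y) := by
    field_simp; ring
  have := div_pos key (mul_pos hx0 hy0)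
  linarith

lemma two_lt_add_inv {x : ℝ} (hx : 1 < x) : 2 < x + x⁻¹ := by
  have hx0 : 0 < x := by linarith
  have h : x + x⁻¹ - 2 = (x-1)^2 / x := by field_simp; ring
  have h2 : 0 < (x-1)^2 / x := div_pos (by nlinarith) hx0
  linarith

lemma add_inv_lt_neg {x : ℝ} (hx : x < -1) : x + x⁻¹ < -2 := by
  have := two_lt_add_inv (x := -x) (by linarith)
  rw [inv_neg] at this
  linarith

lemma off2_of_norm {z : ℂ} (hz : 1 < ‖z‖) : OffSeg 2 (Jmap z) := by
  intro him
  have hzim := Jmap_im_eq_zero hz him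
  have hzr : z = ((z.re : ℝ) : ℂ) := Complex.ext rfl (by simp [hzim])
  have hnr : 1 < |z.re| := by
    rw [hzr, Complex.norm_real, Real.norm_eq_abs] at hz; exact hz
  have hJr : Jmap z = ((z.re + z.re⁻¹ : ℝ) : ℂ) := by
    rw [hzr]; exact Jmap_ofReal z.re
  have hre : (Jmap z).re = z.re + z.re⁻¹ := by rw [hJr]; simp
  rcases lt_abs.1 hnr with h | h
  · right; rw [hre]; exact two_lt_add_inv h
  · left; rw [hre]; exact add_inv_lt_neg (by linarith)

lemma hmap_Jmap {z : ℂ} (hz : 1 < ‖z‖) : hmap (Jmap z) = z := by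
  have hoff := off2_of_norm hz
  have hz0 : z ≠ 0 := by intro h; rw [h] at hz; simp at hz; linarith
  have hsq : sigmaF (Jmap z) ^ 2 = (z - z⁻¹)^2 := by
    rw [sigmaF_sq hoff, Jmap]
    field_simp
    ring
  have hfac : (sigmaF (Jmap z) - (z - z⁻¹)) * (sigmaF (Jmap z) + (z - z⁻¹)) = 0 := by
    linear_combination hsq
  rcases mul_eq_zero.1 hfac with h | h
  · have hσ : sigmaF (Jmap z) = z - z⁻¹ := by linear_combination h
    rw [hmap, hσ, Jmap]; ring
  · have hσ : sigmaF (Jmap z) = -(z - z⁻¹) := by linear_combination h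
    exfalso
    have h1 := hmap_norm hoff
    have h2 : hmap (Jmap z) = z⁻¹ := by rw [hmap, hσ, Jmap]; ring
    rw [h2, norm_inv] at h1
    have := one_lt_inv_iff₀.1 h1
    linarith

/-! ### Putting the explicit map together -/

lemma explicit_map (δ : ℝ) (hδ0 : 0 < δ) :
    ∃ (E : ℂ → ℂ) (M₀ α : ℝ), 0 < α ∧ α * (1 - δ^2/(2+δ)^2) = 1 ∧
      DifferentiableOn ℂ E
        ((Metric.closedBall (0:ℂ) 1 ∪ ((fun x : ℝ => (x:ℂ)) '' Set.Ioc 1 (1+δ)))ᶜ) ∧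
      Set.BijOn E
        ((Metric.closedBall (0:ℂ) 1 ∪ ((fun x : ℝ => (x:ℂ)) '' Set.Ioc 1 (1+δ)))ᶜ) UU ∧
      ∀ w ∈ (Metric.closedBall (0:ℂ) 1 ∪ ((fun x : ℝ => (x:ℂ)) '' Set.Ioc 1 (1+δ)))ᶜ,
        ‖E w - (α:ℂ)⁻¹ * w‖ ≤ M₀ := by
  obtain ⟨s, hs⟩ : ∃ s : ℝ, s = (1+δ) + (1+δ)⁻¹ := ⟨_, rfl⟩
  obtain ⟨α, hα⟩ : ∃ α : ℝ, α = (s+2)/4 := ⟨_, rfl⟩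
  obtain ⟨β, hβ⟩ : ∃ β : ℝ, β = (s-2)/2 := ⟨_, rfl⟩
  have h1δ : (1:ℝ) < 1 + δ := by linarith
  have hs2 : 2 < s := by rw [hs]; exact two_lt_add_inv h1δ
  have hαpos : 0 < α := by rw [hα]; linarith
  have hα0 : (α:ℂ) ≠ 0 := by exact_mod_cast hαpos.ne'
  have hβpos : 0 < β := by rw [hβ]; linarith
  have hid1 : 2*α - β = 2 := by rw [hα, hβ]; ring
  have hid2 : 2*α + β = s := by rw [hα, hβ]; ring
  set K : Set ℂ := Metric.closedBall (0:ℂ) 1 ∪ ((fun x : ℝ => (x:ℂ)) '' Set.Ioc 1 (1+δ))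
    with hK
  -- membership characterization
  have hKc : ∀ w : ℂ, w ∈ Kᶜ ↔
      1 < ‖w‖ ∧ (w.im = 0 → ¬(1 < w.re ∧ w.re ≤ 1+δ)) := by
    intro w
    rw [Set.mem_compl_iff, hK, Set.mem_union]
    constructor
    · intro hw
      rcases not_or.1 hw with ⟨hball, hP⟩
      refine ⟨?_, ?_⟩
      · rw [Metric.mem_closedBall, dist_zero_right] at hball
        exact not_le.1 hball
      · rintro him ⟨h1, h2⟩
        have hwre : ((w.re : ℝ) : ℂ) = w := Complex.ext (by simp) (by simp [him])
        exact hP ⟨w.re, ⟨h1, h2⟩, hwre⟩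
    · rintro ⟨hn, hP⟩
      rw [not_or]
      constructor
      · rw [Metric.mem_closedBall, dist_zero_right]; exact not_le.2 hn
      · rintro ⟨x, ⟨hx1, hx2⟩, rfl⟩
        exact hP (by simp) ⟨by simpa using hx1, by simpa using hx2⟩
  -- the map
  set ζ : ℂ → ℂ := fun w => (Jmap w - (β:ℂ))/(α:ℂ) with hζ
  set E : ℂ → ℂ := fun w => hmap (ζ w) with hE
  -- coordinates of ζ
  have hζim : ∀ w : ℂ, (ζ w).im = (Jmap w).im / α := by
    intro w; rw [hζ]
    simp [Complex.sub_im, Complex.ofReal_im]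
  have hζre : ∀ w : ℂ, (ζ w).re = ((Jmap w).re - β) / α := by
    intro w; rw [hζ]
    simp [Complex.sub_re, Complex.ofReal_re]
  -- transfer of OffSeg
  have htrans : ∀ w : ℂ, OffSeg s (Jmap w) → OffSeg 2 (ζ w) := by
    intro w hw him
    rw [hζim] at him
    have hJim : (Jmap w).im = 0 := by
      field_simp [hαpos.ne'] at him; simpa using him
    rcases hw hJim with h | h
    · left; rw [hζre, div_lt_iff₀ hαpos]; linarith
    · right; rw [hζre, lt_div_iff₀ hαpos]; linarith
  -- J sends Kᶜ off the segment [-2,s]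
  have hJoff : ∀ w : ℂ, 1 < ‖w‖ → (w.im = 0 → ¬(1 < w.re ∧ w.re ≤ 1+δ)) →
      OffSeg s (Jmap w) := by
    intro w hnw hPw him
    have hwim := Jmap_im_eq_zero hnw him
    have hwr : w = ((w.re : ℝ) : ℂ) := Complex.ext rfl (by simp [hwim])
    have hnr : 1 < |w.re| := by
      rw [hwr, Complex.norm_real, Real.norm_eq_abs] at hnw; exact hnw
    have hre : (Jmap w).re = w.re + w.re⁻¹ := by
      conv_lhs => rw [hwr]
      rw [Jmap_ofReal]; simp
    rcases lt_abs.1 hnr with h | h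
    · right; rw [hre]
      have hgt : 1 + δ < w.re := by
        by_contra hle
        push_neg at hle
        exact hPw hwim ⟨h, hle⟩
      rw [hs]
      exact add_inv_lt h1δ hgt
    · left; rw [hre]; exact add_inv_lt_neg (by linarith)
  -- MapsTo
  have hmapsTo : Set.MapsTo E Kᶜ UU := by
    intro w hw
    rw [hKc] at hw
    exact hmap_norm (htrans w (hJoff w hw.1 hw.2))
  -- InjOn
  have hinj : Set.InjOn E Kᶜ := by
    intro w₁ hw₁ w₂ hw₂ heq
    rw [hKc] at hw₁ hw₂
    have h₁ := htrans w₁ (hJoff w₁ hw₁.1 hw₁.2)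
    have h₂ := htrans w₂ (hJoff w₂ hw₂.1 hw₂.2)
    have hζeq : ζ w₁ = ζ w₂ := by
      have := congrArg Jmap heq
      rwa [hE, Jmap_hmap h₁, Jmap_hmap h₂] at this
    have hJeq : Jmap w₁ = Jmap w₂ := by
      have : (Jmap w₁ - (β:ℂ))/(α:ℂ) = (Jmap w₂ - (β:ℂ))/(α:ℂ) := hζeq
      field_simp [hα0] at this
      linear_combination this
    have hw₁0 : w₁ ≠ 0 := by
      intro h
      have := hw₁.1
      rw [h] at this; norm_num at this
    have hw₂0 : w₂ ≠ 0 := by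
      intro h
      have := hw₂.1
      rw [h] at this; norm_num at this
    rw [Jmap, Jmap] at hJeq
    have hfac : (w₁ - w₂) * (w₁ * w₂ - 1) = 0 := by
      have e1 : (w₁ - w₂) * (w₁ * w₂ - 1)
          = (w₁ + w₁⁻¹ - (w₂ + w₂⁻¹)) * (w₁ * w₂) := by
        field_simp
        ring
      rw [e1, hJeq, sub_self, zero_mul]
    rcases mul_eq_zero.1 hfac with h | h
    · linear_combination h
    · exfalso
      have hmul : ‖w₁ * w₂‖ = 1 := by
        have : w₁ * w₂ = 1 := by linear_combination h
        rw [this, norm_one]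
      rw [norm_mul] at hmul
      nlinarith [hw₁.1, hw₂.1]
  -- SurjOn
  have hsurj : Set.SurjOn E Kᶜ UU := by
    intro z hz
    have hz1 : 1 < ‖z‖ := hz
    have hJz := off2_of_norm hz1
    set ξ : ℂ := (α:ℂ) * Jmap z + (β:ℂ) with hξdef
    have hξim : ξ.im = α * (Jmap z).im := by
      rw [hξdef]; simp [Complex.add_im, Complex.mul_im]
    have hξre : ξ.re = α * (Jmap z).re + β := by
      rw [hξdef]; simp [Complex.add_re, Complex.mul_re]
    have hξoffs : OffSeg s ξ := by
      intro him
      rw [hξim] at him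
      have hJim : (Jmap z).im = 0 := by
        rcases mul_eq_zero.1 him with h | h
        · exact absurd h hαpos.ne'
        · exact h
      rcases hJz hJim with h | h
      · left; rw [hξre]; nlinarith
      · right; rw [hξre]; nlinarith
    have hξoff2 : OffSeg 2 ξ := offSeg_mono (le_of_lt hs2) hξoffs
    set w : ℂ := hmap ξ with hwdef
    have hwnorm : 1 < ‖w‖ := hmap_norm hξoff2
    have hJw : Jmap w = ξ := Jmap_hmap hξoff2
    have hζw : ζ w = Jmap z := by
      rw [hζ]
      show (Jmap w - (β:ℂ))/(α:ℂ) = Jmap z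
      rw [hJw, hξdef]
      field_simp
      ring
    have hEw : E w = z := by
      rw [hE]
      show hmap (ζ w) = z
      rw [hζw, hmap_Jmap hz1]
    refine ⟨w, ?_, hEw⟩
    rw [hKc]
    refine ⟨hwnorm, ?_⟩
    rintro hwim ⟨hw1, hw2⟩
    have hwr : w = ((w.re : ℝ) : ℂ) := Complex.ext rfl (by simp [hwim])
    have hJwre : (Jmap w).re = w.re + w.re⁻¹ := by
      conv_lhs => rw [hwr]
      rw [Jmap_ofReal]; simp
    have hJwim : (Jmap w).im = 0 := by
      conv_lhs => rw [hwr]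
      rw [Jmap_ofReal]; simp
    have hξim0 : ξ.im = 0 := by rw [← hJw]; exact hJwim
    have hgt2 : 2 < ξ.re := by
      rw [← hJw, hJwre]; exact two_lt_add_inv hw1
    have hles : ξ.re ≤ s := by
      rw [← hJw, hJwre, hs]
      rcases eq_or_lt_of_le hw2 with h | h
      · rw [h]
      · exact le_of_lt (add_inv_lt hw1 h)
    rcases hξoffs hξim0 with h | h <;> linarith
  -- the bound
  have hbd : ∀ w ∈ Kᶜ, ‖E w - (α:ℂ)⁻¹ * w‖ ≤ 1 + (1+β)/α := by
    intro w hw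
    rw [hKc] at hw
    have hoff := htrans w (hJoff w hw.1 hw.2)
    have hw0 : w ≠ 0 := by
      intro h
      have := hw.1
      rw [h] at this; norm_num at this
    have heq : E w - (α:ℂ)⁻¹ * w = -((hmap (ζ w))⁻¹) + (w⁻¹ - (β:ℂ))/(α:ℂ) := by
      rw [hE]
      show hmap (ζ w) - (α:ℂ)⁻¹ * w = -((hmap (ζ w))⁻¹) + (w⁻¹ - (β:ℂ))/(α:ℂ)
      rw [hmap_inv hoff, hmap]
      have hkey : ζ w - (α:ℂ)⁻¹ * w = (w⁻¹ - (β:ℂ))/(α:ℂ) := by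
        have hz2 : ζ w = (Jmap w - (β:ℂ))/(α:ℂ) := rfl
        have hJ2 : Jmap w = w + w⁻¹ := rfl
        rw [hz2, hJ2]
        field_simp
        ring
      linear_combination hkey
    rw [heq]
    have h1 : ‖(hmap (ζ w))⁻¹‖ ≤ 1 := by
      rw [norm_inv]
      have := hmap_norm hoff
      rw [inv_le_one_iff₀]; right; linarith
    have hnα : ‖(α:ℂ)‖ = α := by
      rw [Complex.norm_real, Real.norm_eq_abs, abs_of_pos hαpos]
    have hnum : ‖w⁻¹ - (β:ℂ)‖ ≤ 1 + β := by
      have ha : ‖w⁻¹ - (β:ℂ)‖ ≤ ‖w⁻¹‖ + ‖(β:ℂ)‖ := norm_sub_le _ _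
      have hb : ‖w⁻¹‖ ≤ 1 := by
        rw [norm_inv, inv_le_one_iff₀]; right; linarith [hw.1]
      have hc : ‖(β:ℂ)‖ = β := by
        rw [Complex.norm_real, Real.norm_eq_abs, abs_of_pos hβpos]
      rw [hc] at ha; linarith
    have h2 : ‖(w⁻¹ - (β:ℂ))/(α:ℂ)‖ ≤ (1+β)/α := by
      rw [norm_div, hnα]
      exact div_le_div_of_nonneg_right hnum hαpos.le
    calc ‖-((hmap (ζ w))⁻¹) + (w⁻¹ - (β:ℂ))/(α:ℂ)‖
        ≤ ‖-((hmap (ζ w))⁻¹)‖ + ‖(w⁻¹ - (β:ℂ))/(α:ℂ)‖ := norm_add_le _ _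
      _ ≤ 1 + (1+β)/α := by rw [norm_neg]; exact add_le_add h1 h2
  -- differentiability
  have hdiff : DifferentiableOn ℂ E Kᶜ := by
    intro w hw
    rw [hKc] at hw
    have hoff := htrans w (hJoff w hw.1 hw.2)
    have hw0 : w ≠ 0 := by
      intro h
      have := hw.1
      rw [h] at this; norm_num at this
    have hζ0 : ζ w ≠ 0 := offSeg_ne_zero (by norm_num) hoff
    have hζd : DifferentiableAt ℂ ζ w := by
      rw [hζ]
      apply DifferentiableAt.div_const
      apply DifferentiableAt.sub_const
      exact differentiableAt_fun_id.add (differentiableAt_inv hw0)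
    have hhd : DifferentiableAt ℂ hmap (ζ w) := by
      have hb : DifferentiableAt ℂ (fun ξ : ℂ => 1 - 4/ξ^2) (ζ w) := by
        apply DifferentiableAt.const_sub
        exact (differentiableAt_const (4:ℂ)).div (differentiableAt_pow 2)
          (pow_ne_zero _ hζ0)
      have hcp : DifferentiableAt ℂ (fun ξ : ℂ => (1 - 4/ξ^2) ^ ((2:ℂ)⁻¹)) (ζ w) :=
        hb.cpow (differentiableAt_const _) (base_slit hoff)
      have hd2 : DifferentiableAt ℂ
          (fun ξ : ℂ => (ξ + ξ * (1 - 4/ξ^2) ^ ((2:ℂ)⁻¹))/2) (ζ w) :=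
        (differentiableAt_fun_id.add (differentiableAt_fun_id.mul hcp)).div_const 2
      exact hd2
    exact ((hhd.comp w hζd).congr_of_eventuallyEq
      (Filter.Eventually.of_forall fun v => rfl)).differentiableWithinAt
  have hα1t : α * (1 - δ^2/(2+δ)^2) = 1 := by
    rw [hα, hs]
    have h1 : (1+δ) ≠ 0 := by linarith
    have h2 : (2+δ) ≠ 0 := by linarith
    field_simp
    ring
  exact ⟨E, 1 + (1+β)/α, α, hαpos, hα1t, hdiff, ⟨hmapsTo, hinj, hsurj⟩, hbd⟩

/-- `F` is the normalized conformal map from the exterior `D₀` of the closed unit disc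
onto the complement of `K`, with `F(z) = e^c z + O(1)` at infinity.  The constant `c`
is then the logarithmic capacity `cap K`. -/
def IsNormalizedExteriorMap (K : Set ℂ) (c : ℝ) (F : ℂ → ℂ) : Prop :=
  DifferentiableOn ℂ F {z : ℂ | 1 < ‖z‖} ∧
  Set.BijOn F {z : ℂ | 1 < ‖z‖} Kᶜ ∧
  ∃ M : ℝ, ∀ z : ℂ, 1 < ‖z‖ → ‖F z - Real.exp c * z‖ ≤ M

/-- For δ ∈ (0,1/3] and t = δ²/(2+δ)², the logarithmic capacity of the slit cluster
`K₀ ∪ (1, 1+δ]` equals `-log(1-t)` and satisfies `-log(1-t) ≥ δ²/6`. -/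
theorem stmt2 (δ : ℝ) (hδ : δ ∈ Set.Ioc (0:ℝ) (1/3)) :
    let t : ℝ := δ^2 / (2 + δ)^2
    let P : Set ℂ := (fun x : ℝ => (x : ℂ)) '' Set.Ioc 1 (1 + δ)
    let K : Set ℂ := Metric.closedBall (0:ℂ) 1 ∪ P
    (∀ (c : ℝ) (F : ℂ → ℂ), IsNormalizedExteriorMap K c F → c = -Real.log (1 - t)) ∧
    δ^2 / 6 ≤ -Real.log (1 - t) := by
  obtain ⟨hδ0, hδ3⟩ := hδ
  intro t P K
  have ht : t = δ^2 / (2 + δ)^2 := rfl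
  have htpos : 0 < t := by
    rw [ht]; exact div_pos (pow_pos hδ0 2) (by positivity)
  have ht1 : t < 1 := by
    rw [ht, div_lt_one (by positivity)]
    nlinarith
  have h1t : 0 < 1 - t := by linarith
  constructor
  · intro c F hF
    obtain ⟨hFd, hFb, M, hFM⟩ := hF
    obtain ⟨E, M₀, α, hαpos, hα1t, hEd, hEb, hEbd⟩ := explicit_map δ hδ0
    have ha : 0 < Real.exp c / α := div_pos (Real.exp_pos c) hαpos
    have hd : DifferentiableOn ℂ (E ∘ F) UU := hEd.comp hFd hFb.mapsTo
    have hb : Set.BijOn (E ∘ F) UU UU := hEb.comp hFb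
    have hM : ∀ z : ℂ, 1 < ‖z‖ →
        ‖(E ∘ F) z - ((Real.exp c / α : ℝ):ℂ) * z‖ ≤ M₀ + ‖((α:ℝ):ℂ)⁻¹‖ * M := by
      intro z hz
      have hFz : F z ∈ Kᶜ := hFb.mapsTo hz
      have h1 := hEbd (F z) hFz
      have h2 := hFM z hz
      have heq : (E ∘ F) z - ((Real.exp c / α : ℝ):ℂ) * z
          = (E (F z) - ((α:ℝ):ℂ)⁻¹ * F z)
            + ((α:ℝ):ℂ)⁻¹ * (F z - (Real.exp c : ℝ) * z) := by
        have hcast : ((Real.exp c / α : ℝ):ℂ) = ((α:ℝ):ℂ)⁻¹ * ((Real.exp c : ℝ):ℂ) := by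
          push_cast; ring
        rw [Function.comp_apply, hcast]; ring
      rw [heq]
      calc ‖(E (F z) - ((α:ℝ):ℂ)⁻¹ * F z)
            + ((α:ℝ):ℂ)⁻¹ * (F z - (Real.exp c : ℝ) * z)‖
          ≤ ‖E (F z) - ((α:ℝ):ℂ)⁻¹ * F z‖
            + ‖((α:ℝ):ℂ)⁻¹ * (F z - (Real.exp c : ℝ) * z)‖ := norm_add_le _ _
        _ ≤ M₀ + ‖((α:ℝ):ℂ)⁻¹‖ * M := by
            rw [norm_mul]
            exact add_le_add h1 (mul_le_mul_of_nonneg_left h2 (norm_nonneg _))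
    have hae : Real.exp c / α = 1 := key_lemma ha hd hb hM
    have hexp : Real.exp c = α := by
      field_simp at hae; exact hae
    have hcl : c = Real.log α := by rw [← Real.log_exp c, hexp]
    have hα1t' : α * (1 - t) = 1 := by rw [ht]; exact hα1t
    have hαinv : α = (1-t)⁻¹ := eq_inv_of_mul_eq_one_left hα1t'
    rw [hcl, hαinv, Real.log_inv]
  · have hlog : Real.log (1-t) ≤ (1-t) - 1 := Real.log_le_sub_one_of_pos h1t
    have hts : δ^2/6 ≤ t := by
      rw [ht, div_le_div_iff₀ (by norm_num) (by positivity)]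
      have h6 : (2+δ)^2 ≤ 6 := by nlinarith
      nlinarith [mul_le_mul_of_nonneg_left h6 (sq_nonneg δ)]
    linarith
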